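/- If U and V both satisfy: for each s, the map x ↦ U(s,x) (resp. V(s,x)) is non-decreasing and right-continuous, and for each x ∈ ℝ ∪ {∞}, s ↦ U(s,x) (resp. V(s,x)) is upper semicontinuous, then the composition W(s,x) = V(s, U(s,x)) satisfies the same two properties. -/

import Mathlib

open Set Filter

/-- Lemma 3.4: the class `𝒰(D)` is stable under composition: if `U` and `V` belong to
`𝒰(D)`, then so does `W(s,x) = V(s, U(s,x))`. -/
theorem stmt_9 {N : ℕ} (D : Set (EuclideanSpace ℝ (Fin N))) (hne : D.Nonempty)
    (hlc : LocallyCompactSpace D)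
    (U V : D → EReal → EReal)
    (hU1 : ∀ s : D, Monotone (U s))
    (hU2 : ∀ s : D, ∀ x : EReal, ContinuousWithinAt (U s) (Ici x) x)
    (hU3 : ∀ x : EReal, x ≠ ⊥ → UpperSemicontinuous (fun s => U s x))
    (hV1 : ∀ s : D, Monotone (V s))
    (hV2 : ∀ s : D, ∀ x : EReal, ContinuousWithinAt (V s) (Ici x) x)
    (hV3 : ∀ x : EReal, x ≠ ⊥ → UpperSemicontinuous (fun s => V s x)) :
    (∀ s : D, Monotone (fun x => V s (U s x))) ∧
    (∀ s : D, ∀ x : EReal, ContinuousWithinAt (fun y => V s (U s y)) (Ici x) x) ∧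
    (∀ x : EReal, x ≠ ⊥ → UpperSemicontinuous (fun s => V s (U s x))) := by
  refine ⟨fun s a b hab => hV1 s (hU1 s hab), ?_, ?_⟩
  · intro s x
    exact (hV2 s (U s x)).comp (hU2 s x) (fun y hy => hU1 s hy)
  · intro x hx s₀ c hc
    by_cases h : U s₀ x = ⊤
    · have h3 := hV3 ⊤ (by simp) s₀ c (by simpa [h] using hc)
      filter_upwards [h3] with s hs
      exact lt_of_le_of_lt (hV1 s le_top) hs
    · obtain ⟨y, hy1, hy2⟩ : ∃ y, U s₀ x < y ∧ V s₀ y < c := by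
        have hc' : V s₀ (U s₀ x) < c := hc
        have hev : ∀ᶠ y in nhdsWithin (U s₀ x) (Ici (U s₀ x)), V s₀ y < c :=
          (hV2 s₀ (U s₀ x)).eventually (Filter.Tendsto.eventually_lt_const hc' tendsto_id)
        have hev2 : ∀ᶠ y in nhdsWithin (U s₀ x) (Ioi (U s₀ x)), V s₀ y < c :=
          hev.filter_mono (nhdsWithin_mono _ Ioi_subset_Ici_self)
        have : (nhdsWithin (U s₀ x) (Ioi (U s₀ x))).NeBot :=
          nhdsGT_neBot_of_exists_gt ⟨⊤, lt_top_iff_ne_top.2 h⟩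
        obtain ⟨y, hy, hy'⟩ := (hev2.and self_mem_nhdsWithin).exists
        exact ⟨y, hy', hy⟩
      have hU := hU3 x hx s₀ y hy1
      have hV := hV3 y (ne_bot_of_gt hy1) s₀ c hy2
      filter_upwards [hU, hV] with s h1 h2
      exact lt_of_le_of_lt (hV1 s (h1.le)) h2
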